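/- arXiv:2308.13753 — 2 statements merged into one kernel-verified Lean document; each statement's English description precedes it below -/
import Mathlib

section
/- Let (γ_j) be nonincreasing in (0,1] with δ = liminf_{j→∞} (ln γ_j⁻¹)/(ln j) > 0 and α_1 > 1/2. Then for every τ > max{1/δ, 1/(2α_1)}, sup_{d∈ℕ} ∏_{j=1}^d (1 + 2γ_j^τ ζ(2α_jτ)) < ∞, where α_j ≥ α_1 is nondecreasing. -/
noncomputable def zeta (s : ℝ) : ℝ := ∑' k : ℕ, ((k : ℝ) + 1) ^ (-s)

lemma zeta_summable {s : ℝ} (hs : 1 < s) :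
    Summable (fun k : ℕ => ((k : ℝ) + 1) ^ (-s)) := by
  have h : Summable (fun n : ℕ => (n : ℝ) ^ (-s)) :=
    Real.summable_nat_rpow.2 (by linarith)
  have := (summable_nat_add_iff 1).2 h
  convert this using 2 with k
  · rfl
  push_cast
  ring_nf

lemma zeta_nonneg (s : ℝ) : 0 ≤ zeta s :=
  tsum_nonneg fun k => Real.rpow_nonneg (by positivity) _

lemma zeta_mono {s t : ℝ} (hs : 1 < s) (hst : s ≤ t) : zeta t ≤ zeta s := by
  refine Summable.tsum_le_tsum (fun k => ?_) (zeta_summable (lt_of_lt_of_le hs hst)) (zeta_summable hs)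
  exact Real.rpow_le_rpow_of_exponent_le (by push_cast; linarith [Nat.cast_nonneg (α := ℝ) k]) (by linarith)

theorem stmt_16 (γ : ℕ → ℝ) (hγ : ∀ j, 0 < γ j ∧ γ j ≤ 1) (hmono : Antitone γ)
    (δ : ℝ) (hδ0 : 0 < δ)
    (hδ : Filter.liminf (fun j : ℕ => Real.log (γ j)⁻¹ / Real.log j) Filter.atTop = δ)
    (α : ℕ → ℝ) (hα : Monotone α) (hα1 : 1 / 2 < α 1)
    (τ : ℝ) (hτ : max (1 / δ) (1 / (2 * α 1)) < τ) :
    ∃ B : ℝ, ∀ d : ℕ,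
      ∏ j ∈ Finset.Icc 1 d, (1 + 2 * γ j ^ τ * zeta (2 * α j * τ)) ≤ B := by
  have hα1' : 0 < α 1 := by linarith
  have hτδ : 1 / δ < τ := lt_of_le_of_lt (le_max_left _ _) hτ
  have hτα : 1 / (2 * α 1) < τ := lt_of_le_of_lt (le_max_right _ _) hτ
  have hτ0 : 0 < τ := lt_trans (by positivity) hτδ
  -- the base exponent s = 2 * α 1 * τ > 1
  have hs1 : 1 < 2 * α 1 * τ := by
    rw [div_lt_iff₀ (by positivity)] at hτα
    linarith
  -- choose r with 1/τ < r < δ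
  set r : ℝ := (1 / τ + δ) / 2 with hr
  have hrτ : 1 / τ < r := by
    have : 1 / τ < δ := by
      rw [div_lt_iff₀ hδ0] at hτδ
      rw [div_lt_iff₀ hτ0]
      linarith [mul_comm δ τ]
    simp only [hr]; linarith
  have hrδ : r < δ := by
    have : 1 / τ < δ := by
      rw [div_lt_iff₀ hδ0] at hτδ
      rw [div_lt_iff₀ hτ0]
      linarith [mul_comm δ τ]
    simp only [hr]; linarith
  have hr0 : 0 < r := lt_trans (by positivity) hrτ
  have hrτ1 : 1 < r * τ := by
    rw [div_lt_iff₀ hτ0] at hrτ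
    linarith
  -- eventually r < log (γ j)⁻¹ / log j
  have hbdd : Filter.IsBoundedUnder (· ≥ ·) Filter.atTop
      (fun j : ℕ => Real.log (γ j)⁻¹ / Real.log j) := by
    refine ⟨0, Filter.eventually_map.2 ?_⟩
    filter_upwards [Filter.eventually_ge_atTop 2] with j hj
    have h1 : (0:ℝ) ≤ Real.log (γ j)⁻¹ := by
      rw [Real.log_inv]
      linarith [Real.log_nonpos (le_of_lt (hγ j).1) (hγ j).2]
    have h2 : (0:ℝ) ≤ Real.log j := Real.log_nonneg (by exact_mod_cast Nat.one_le_of_lt hj)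
    positivity
  have hev : ∀ᶠ j in Filter.atTop, r < Real.log (γ j)⁻¹ / Real.log j :=
    Filter.eventually_lt_of_lt_liminf (by rw [hδ]; exact hrδ) hbdd
  -- hence eventually γ j ^ τ ≤ j ^ (-(r * τ))
  have hev2 : ∀ᶠ j : ℕ in Filter.atTop, γ j ^ τ ≤ (j : ℝ) ^ (-(r * τ)) := by
    filter_upwards [hev, Filter.eventually_ge_atTop 2] with j hj hj2
    have hj1 : (1:ℝ) < j := by exact_mod_cast hj2
    have hlogj : 0 < Real.log j := Real.log_pos hj1
    have hγj : γ j ≤ (j : ℝ) ^ (-r) := by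
      have h1 : r * Real.log j < Real.log (γ j)⁻¹ := by
        rw [lt_div_iff₀ hlogj] at hj
        linarith
      have h2 : Real.log ((j:ℝ) ^ r) < Real.log (γ j)⁻¹ := by
        rwa [Real.log_rpow (by linarith)]
      have hγ0 := (hγ j).1
      have h3 : (j:ℝ) ^ r < (γ j)⁻¹ :=
        (Real.log_lt_log_iff (by positivity) (by positivity)).1 h2
      have h4 : γ j < ((j:ℝ) ^ r)⁻¹ :=
        (lt_inv_comm₀ (by positivity) hγ0).1 h3
      rw [← Real.rpow_neg (by positivity)] at h4
      exact le_of_lt h4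
    calc γ j ^ τ ≤ ((j:ℝ) ^ (-r)) ^ τ :=
          Real.rpow_le_rpow (le_of_lt (hγ j).1) hγj (le_of_lt hτ0)
      _ = (j : ℝ) ^ (-(r * τ)) := by
          rw [← Real.rpow_mul (Nat.cast_nonneg j)]
          ring_nf
  -- summability of γ ^ τ
  have hsum : Summable (fun j : ℕ => γ j ^ τ) := by
    obtain ⟨N, hN⟩ := Filter.eventually_atTop.1 hev2
    rw [← summable_nat_add_iff N]
    have hf : Summable (fun n : ℕ => (n : ℝ) ^ (-(r * τ))) :=
      Real.summable_nat_rpow.2 (by linarith)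
    have hb : Summable (fun j : ℕ => ((j + N : ℕ) : ℝ) ^ (-(r * τ))) :=
      (summable_nat_add_iff N).2 hf
    refine Summable.of_nonneg_of_le (fun j => ?_) (fun j => ?_) hb
    · exact Real.rpow_nonneg (le_of_lt (hγ _).1) _
    · exact hN _ (Nat.le_add_left N j)
  -- the dominating summable sequence
  set Z : ℝ := zeta (2 * α 1 * τ) with hZ
  have hZ0 : 0 ≤ Z := zeta_nonneg _
  set c : ℕ → ℝ := fun j => 2 * γ j ^ τ * Z with hc
  have hcsum : Summable c := by
    simpa [hc, mul_comm, mul_assoc, mul_left_comm] using (hsum.mul_left (2 * Z))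
  have hcnn : ∀ j, 0 ≤ c j := fun j => by
    have := (hγ j).1
    have : 0 ≤ γ j ^ τ := Real.rpow_nonneg (le_of_lt this) _
    simp only [hc]; positivity
  refine ⟨Real.exp (∑' j, c j), fun d => ?_⟩
  have step1 : ∏ j ∈ Finset.Icc 1 d, (1 + 2 * γ j ^ τ * zeta (2 * α j * τ)) ≤
      ∏ j ∈ Finset.Icc 1 d, Real.exp (c j) := by
    refine Finset.prod_le_prod (fun j hj => ?_) (fun j hj => ?_)
    · have h1 : 0 ≤ γ j ^ τ := Real.rpow_nonneg (le_of_lt (hγ j).1) _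
      have h2 : 0 ≤ zeta (2 * α j * τ) := zeta_nonneg _
      positivity
    · have hj1 : 1 ≤ j := (Finset.mem_Icc.1 hj).1
      have hαj : α 1 ≤ α j := hα hj1
      have h1 : zeta (2 * α j * τ) ≤ Z := by
        refine zeta_mono hs1 ?_
        have : 0 ≤ τ := le_of_lt hτ0
        nlinarith
      have h2 : 0 ≤ γ j ^ τ := Real.rpow_nonneg (le_of_lt (hγ j).1) _
      calc 1 + 2 * γ j ^ τ * zeta (2 * α j * τ) ≤ 1 + c j := by
            simp only [hc]; nlinarith
        _ ≤ Real.exp (c j) := by linarith [Real.add_one_le_exp (c j)]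
  have step2 : ∏ j ∈ Finset.Icc 1 d, Real.exp (c j) = Real.exp (∑ j ∈ Finset.Icc 1 d, c j) :=
    (Real.exp_sum _ _).symm
  have step3 : ∑ j ∈ Finset.Icc 1 d, c j ≤ ∑' j, c j :=
    Summable.sum_le_tsum _ (fun j _ => hcnn j) hcsum
  calc ∏ j ∈ Finset.Icc 1 d, (1 + 2 * γ j ^ τ * zeta (2 * α j * τ))
      ≤ ∏ j ∈ Finset.Icc 1 d, Real.exp (c j) := step1
    _ = Real.exp (∑ j ∈ Finset.Icc 1 d, c j) := step2
    _ ≤ Real.exp (∑' j, c j) := Real.exp_le_exp.2 step3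
end

section
/- Let (λ_{d,n})_{n∈ℕ} for each d be the nonincreasing rearrangement of the values {∏_{j=1}^d r_{α_j,γ_j}(k_j) : k ∈ ℤ^d}. Then for n(ε,d) := |{k ∈ ℤ^d : ∏_{j=1}^d r_{α_j,γ_j}(k_j) > ε²}| and any τ with 2α_1τ > 1, n(ε,d) ≤ 1 + ε^{-2τ} ∏_{j=1}^d (1 + 2γ_j^τ ζ(2α_jτ)). -/
noncomputable def r (α γ : ℝ) (k : ℤ) : ℝ :=
  if k = 0 then 1 else γ * |(k : ℝ)| ^ (-(2 * α))

lemma r_nonneg {α γ : ℝ} (hγ : 0 ≤ γ) (k : ℤ) : 0 ≤ r α γ k := by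
  unfold r; split
  · norm_num
  · positivity

lemma sum_abs_rpow_le {s : ℝ} (hs : 1 < s) (U : Finset ℤ) (hU : ∀ m ∈ U, m ≠ 0)
    (hinj : ∀ m1 ∈ U, ∀ m2 ∈ U, m1.natAbs - 1 = m2.natAbs - 1 → m1 = m2) :
    ∑ m ∈ U, |(m : ℝ)| ^ (-s) ≤ zeta s := by
  have key : ∀ m ∈ U, |(m : ℝ)| ^ (-s) = (((m.natAbs - 1 : ℕ) : ℝ) + 1) ^ (-s) := by
    intro m hm
    have h1 : 1 ≤ m.natAbs := Int.natAbs_pos.mpr (hU m hm)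
    have habs : |(m : ℝ)| = ((m.natAbs : ℕ) : ℝ) := by
      rw [← Int.cast_abs, Int.abs_eq_natAbs, Int.cast_natCast]
    rw [habs]
    congr 1
    rw [Nat.cast_sub h1]
    ring
  rw [Finset.sum_congr rfl key,
    ← Finset.sum_image (g := fun m : ℤ => m.natAbs - 1)
      (f := fun n : ℕ => ((n : ℝ) + 1) ^ (-s)) hinj]
  exact Summable.sum_le_tsum _ (fun n _ => Real.rpow_nonneg (by positivity) _) (zeta_summable hs)

lemma sum_g_le {α γ τ : ℝ} (hγ0 : 0 ≤ γ) (hs : 1 < 2 * α * τ)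
    (T : Finset ℤ) :
    ∑ m ∈ T, (r α γ m) ^ τ ≤ 1 + 2 * γ ^ τ * zeta (2 * α * τ) := by
  set s : ℝ := 2 * α * τ with hsdef
  -- value of g on nonzero m
  have hval : ∀ m : ℤ, m ≠ 0 → (r α γ m) ^ τ = γ ^ τ * |(m : ℝ)| ^ (-s) := by
    intro m hm
    have habs : (0 : ℝ) ≤ |(m : ℝ)| := abs_nonneg _
    rw [r, if_neg hm, Real.mul_rpow hγ0 (Real.rpow_nonneg habs _),
      ← Real.rpow_mul habs]
    congr 1
    rw [hsdef]; ring
  have hg0 : ∀ m : ℤ, 0 ≤ (r α γ m) ^ τ := fun m => Real.rpow_nonneg (r_nonneg hγ0 m) _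
  -- split off 0
  set T' : Finset ℤ := T.erase 0 with hT'
  have hsub : T ⊆ insert 0 T' := by
    intro m hm
    by_cases h : m = 0
    · simp [h]
    · exact Finset.mem_insert_of_mem (Finset.mem_erase.mpr ⟨h, hm⟩)
  have h1 : ∑ m ∈ T, (r α γ m) ^ τ ≤ ∑ m ∈ insert 0 T', (r α γ m) ^ τ :=
    Finset.sum_le_sum_of_subset_of_nonneg hsub (fun m _ _ => hg0 m)
  rw [Finset.sum_insert (Finset.notMem_erase 0 T)] at h1
  have hr0 : (r α γ 0) ^ τ = 1 := by rw [r, if_pos rfl, Real.one_rpow]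
  -- bound the nonzero part
  have hT'ne : ∀ m ∈ T', m ≠ 0 := fun m hm => (Finset.mem_erase.mp hm).1
  have h2 : ∑ m ∈ T', (r α γ m) ^ τ = γ ^ τ * ∑ m ∈ T', |(m : ℝ)| ^ (-s) := by
    rw [Finset.mul_sum]
    exact Finset.sum_congr rfl (fun m hm => hval m (hT'ne m hm))
  -- split T' into positives and negatives
  have h3 : ∑ m ∈ T', |(m : ℝ)| ^ (-s) ≤ 2 * zeta s := by
    have hsplit := Finset.sum_filter_add_sum_filter_not T' (fun m : ℤ => 0 < m)
      (fun m => |(m : ℝ)| ^ (-s))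
    have hp : ∑ m ∈ T'.filter (fun m : ℤ => 0 < m), |(m : ℝ)| ^ (-s) ≤ zeta s := by
      apply sum_abs_rpow_le hs
      · intro m hm; exact hT'ne m (Finset.mem_filter.mp hm).1
      · intro m1 hm1 m2 hm2 h
        have p1 := (Finset.mem_filter.mp hm1).2
        have p2 := (Finset.mem_filter.mp hm2).2
        omega
    have hn : ∑ m ∈ T'.filter (fun m : ℤ => ¬ 0 < m), |(m : ℝ)| ^ (-s) ≤ zeta s := by
      apply sum_abs_rpow_le hs
      · intro m hm; exact hT'ne m (Finset.mem_filter.mp hm).1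
      · intro m1 hm1 m2 hm2 h
        have p1 := (Finset.mem_filter.mp hm1).2
        have p2 := (Finset.mem_filter.mp hm2).2
        have q1 := hT'ne m1 (Finset.mem_filter.mp hm1).1
        have q2 := hT'ne m2 (Finset.mem_filter.mp hm2).1
        omega
    linarith
  have hγτ : 0 ≤ γ ^ τ := Real.rpow_nonneg hγ0 _
  calc ∑ m ∈ T, (r α γ m) ^ τ ≤ 1 + ∑ m ∈ T', (r α γ m) ^ τ := by rw [hr0] at h1; exact h1
    _ = 1 + γ ^ τ * ∑ m ∈ T', |(m : ℝ)| ^ (-s) := by rw [h2]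
    _ ≤ 1 + γ ^ τ * (2 * zeta s) := by nlinarith [mul_le_mul_of_nonneg_left h3 hγτ]
    _ = 1 + 2 * γ ^ τ * zeta s := by ring

set_option maxHeartbeats 1000000 in
theorem stmt_19 (γ : ℕ → ℝ) (hγ : ∀ j, 0 ≤ γ j ∧ γ j ≤ 1)
    (α : ℕ → ℝ) (hα : Monotone α) (hα1 : 1 / 2 < α 0)
    (d : ℕ) (ε : ℝ) (hε : 0 < ε ∧ ε < 1)
    (τ : ℝ) (hτ : 1 / (2 * α 0) < τ) :
    {k : Fin d → ℤ | ε ^ 2 < ∏ j : Fin d, r (α j) (γ j) (k j)}.Finite ∧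
    (({k : Fin d → ℤ | ε ^ 2 < ∏ j : Fin d, r (α j) (γ j) (k j)}).ncard : ℝ)
      ≤ 1 + ε ^ (-(2 * τ)) *
          ∏ j ∈ Finset.range d, (1 + 2 * γ j ^ τ * zeta (2 * α j * τ)) := by
  obtain ⟨hε0, hε1⟩ := hε
  have hα0 : 0 < α 0 := by linarith
  have hτ0 : 0 < τ := lt_trans (by positivity) hτ
  have hsj : ∀ j : ℕ, 1 < 2 * α j * τ := by
    intro j
    have h0 : 1 < 2 * α 0 * τ := by
      rw [div_lt_iff₀ (by positivity)] at hτ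
      linarith
    have : α 0 ≤ α j := hα (Nat.zero_le j)
    nlinarith
  set S : ℕ → ℝ := fun j => 1 + 2 * γ j ^ τ * zeta (2 * α j * τ) with hS
  have hS0 : ∀ j, 0 ≤ S j := by
    intro j
    have := zeta_nonneg (2 * α j * τ)
    have := Real.rpow_nonneg (hγ j).1 τ
    positivity
  set P : ℝ := ∏ j ∈ Finset.range d, S j with hP
  have hP0 : 0 ≤ P := Finset.prod_nonneg fun j _ => hS0 j
  -- Chebyshev bound for any finite subset
  have cheb : ∀ F : Finset (Fin d → ℤ),
      (∀ k ∈ F, ε ^ 2 < ∏ j : Fin d, r (α j) (γ j) (k j)) →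
      (F.card : ℝ) ≤ ε ^ (-(2 * τ)) * P := by
    intro F hF
    have hε2τ : (0:ℝ) < ε ^ ((2 * τ) : ℝ) := Real.rpow_pos_of_pos hε0 _
    have key : (F.card : ℝ) * ε ^ ((2 * τ) : ℝ) ≤ P := by
      have step1 : ∀ k ∈ F, ε ^ ((2 * τ) : ℝ) ≤ ∏ j : Fin d, (r (α j) (γ j) (k j)) ^ τ := by
        intro k hk
        have h1 : ε ^ ((2 * τ) : ℝ) = (ε ^ 2) ^ τ := by
          rw [← Real.rpow_natCast ε 2, ← Real.rpow_mul hε0.le]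
          norm_num
        have h2 : ∏ j : Fin d, r (α j) (γ j) (k j) ^ τ
            = (∏ j : Fin d, r (α j) (γ j) (k j)) ^ τ :=
          Real.finset_prod_rpow Finset.univ (fun j : Fin d => r (α j) (γ j) (k j))
            (fun j _ => r_nonneg (hγ j).1 _) τ
        rw [h1, h2]
        exact Real.rpow_le_rpow (sq_nonneg ε) (le_of_lt (hF k hk)) hτ0.le
      set T : (j : Fin d) → Finset ℤ := fun j => F.image (fun k => k j) with hT
      have hsub : F ⊆ Fintype.piFinset T := by
        intro k hk
        exact Fintype.mem_piFinset.mpr fun j => Finset.mem_image_of_mem _ hk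
      have hg0 : ∀ (k : Fin d → ℤ), 0 ≤ ∏ j : Fin d, (r (α j) (γ j) (k j)) ^ τ :=
        fun k => Finset.prod_nonneg fun j _ => Real.rpow_nonneg (r_nonneg (hγ j).1 _) _
      calc (F.card : ℝ) * ε ^ ((2 * τ) : ℝ) = ∑ _k ∈ F, ε ^ ((2 * τ) : ℝ) := by
            rw [Finset.sum_const, nsmul_eq_mul]
        _ ≤ ∑ k ∈ F, ∏ j : Fin d, (r (α j) (γ j) (k j)) ^ τ := Finset.sum_le_sum step1
        _ ≤ ∑ k ∈ Fintype.piFinset T, ∏ j : Fin d, (r (α j) (γ j) (k j)) ^ τ :=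
            Finset.sum_le_sum_of_subset_of_nonneg hsub (fun k _ _ => hg0 k)
        _ = ∏ j : Fin d, ∑ m ∈ T j, (r (α j) (γ j) m) ^ τ :=
            (Finset.prod_univ_sum T (fun (j : Fin d) (m : ℤ) => r (α j) (γ j) m ^ τ)).symm
        _ ≤ ∏ j : Fin d, S (j : ℕ) := by
            apply Finset.prod_le_prod
            · intro j _
              exact Finset.sum_nonneg fun m _ =>
                Real.rpow_nonneg (r_nonneg (hγ j).1 _) _
            · intro j _
              exact sum_g_le (hγ j).1 (hsj j) (T j)
        _ = P := by rw [hP]; exact Fin.prod_univ_eq_prod_range (fun j => S j) d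
    calc (F.card : ℝ) = (F.card : ℝ) * ε ^ ((2 * τ) : ℝ) * ε ^ (-(2 * τ) : ℝ) := by
          rw [mul_assoc, ← Real.rpow_add hε0]; norm_num
      _ ≤ P * ε ^ (-(2 * τ) : ℝ) := by
          apply mul_le_mul_of_nonneg_right key (Real.rpow_nonneg hε0.le _)
      _ = ε ^ (-(2 * τ)) * P := mul_comm _ _
  -- finiteness
  have hfin : {k : Fin d → ℤ | ε ^ 2 < ∏ j : Fin d, r (α j) (γ j) (k j)}.Finite := by
    by_contra hinf
    have hinf' : {k : Fin d → ℤ | ε ^ 2 < ∏ j : Fin d, r (α j) (γ j) (k j)}.Infinite := hinf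
    obtain ⟨F, hFs, hFc⟩ := hinf'.exists_subset_card_eq (⌈ε ^ (-(2 * τ)) * P⌉₊ + 1)
    have hb := cheb F (fun k hk => hFs hk)
    rw [hFc] at hb
    have hc := Nat.le_ceil (ε ^ (-(2 * τ)) * P)
    push_cast at hb
    linarith
  refine ⟨hfin, ?_⟩
  rw [Set.ncard_eq_toFinset_card _ hfin]
  have hb := cheb hfin.toFinset (fun k hk => (Set.Finite.mem_toFinset hfin).mp hk)
  have hrp : 0 ≤ ε ^ (-(2 * τ)) := Real.rpow_nonneg hε0.le _
  nlinarith [mul_nonneg hrp hP0]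
end
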